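/- If f_n depends only on the n-th coordinate of a finite product probability space X = ∏_{n=1}^N X_n and G_n is a sub-σ-algebra of F_n, then the conditional expectation of f_n with respect to the σ-algebra lifted from G_n equals the conditional expectation of f_n with respect to the product σ-algebra G_1 × G_2 × ⋯ × G_N. -/

import Mathlib

open MeasureTheory

open Set Function in
/-- If `f` depends only on the `n₀`-th coordinate of a finite product probability
space and `G n` is a sub-σ-algebra of the `n`-th factor `F n`, then the conditional
expectation of `f` with respect to the σ-algebra lifted from `G n₀` coincides
(a.e.) with the conditional expectation with respect to the full product
σ-algebra `G 1 × ⋯ × G N`. -/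
theorem condexp_coordinate_eq_condexp_pi
    {N : ℕ} {X : Fin N → Type*} (G : ∀ n, MeasurableSpace (X n))
    [mX : ∀ n, MeasurableSpace (X n)]
    (μ : ∀ n, Measure (X n)) [∀ n, IsProbabilityMeasure (μ n)]
    {E : Type*} [NormedAddCommGroup E] [NormedSpace ℝ E] [CompleteSpace E]
    (hG : ∀ n, G n ≤ mX n)
    (n₀ : Fin N) (f : X n₀ → E)
    (hf : Integrable (fun x : ∀ n, X n => f (x n₀)) (Measure.pi μ)) :
    (Measure.pi μ)[(fun x : ∀ n, X n => f (x n₀)) | (G n₀).comap (fun x => x n₀)]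
      =ᵐ[Measure.pi μ]
    (Measure.pi μ)[(fun x : ∀ n, X n => f (x n₀)) |
      ⨆ n : Fin N, (G n).comap (fun x : ∀ n, X n => x n)] := by
  classical
  -- the decomposition of the product space as (coordinates ≠ n₀) × (coordinate n₀)
  set p : Fin N → Prop := fun n => ¬ (n = n₀) with hp
  letI hu : Unique {n // ¬ p n} :=
    ⟨⟨⟨n₀, not_not_intro rfl⟩⟩, fun j => Subtype.ext (not_not.mp j.2)⟩
  let e := MeasurableEquiv.piEquivPiSubtypeProd X p
  let u : (∀ i : {n // ¬ p n}, X i) ≃ᵐ X n₀ :=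
    MeasurableEquiv.piUnique (fun i : {n // ¬ p n} => X i)
  let ψ : (∀ n, X n) ≃ᵐ (∀ i : {n // p n}, X i) × X n₀ :=
    e.trans ((MeasurableEquiv.refl _).prodCongr u)
  have hψa : ∀ x : ∀ n, X n, ψ x = (fun i : {n // p n} => x i, x n₀) := fun x => rfl
  have hψ : MeasurePreserving ψ (Measure.pi μ)
      ((Measure.pi fun i : {n // p n} => μ i).prod (μ n₀)) := by
    have h1 := measurePreserving_piEquivPiSubtypeProd μ p
    have h2 : MeasurePreserving (Prod.map (id : (∀ i : {n // p n}, X i) → _) u)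
        ((Measure.pi fun i : {n // p n} => μ i).prod
          (Measure.pi fun i : {n // ¬ p n} => μ i))
        ((Measure.pi fun i : {n // p n} => μ i).prod (μ n₀)) :=
      (MeasurePreserving.id _).prod (measurePreserving_piUnique _)
    exact h2.comp h1
  -- the coordinate projection preserves the measure
  have hev : MeasurePreserving (fun x : ∀ n, X n => x n₀) (Measure.pi μ) (μ n₀) := by
    have hsnd : MeasurePreserving (Prod.snd)
        ((Measure.pi fun i : {n // p n} => μ i).prod (μ n₀)) (μ n₀) :=
      ⟨measurable_snd, by rw [Measure.map_snd_prod, measure_univ, one_smul]⟩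
    exact hsnd.comp hψ
  -- f is integrable on the factor
  have hfi : Integrable f (μ n₀) := by
    have h1 : Integrable ((fun z : (∀ i : {n // p n}, X i) × X n₀ => f z.2) ∘ ψ)
        (Measure.pi μ) := hf
    have h2 := (hψ.integrable_comp_emb ψ.measurableEmbedding).mp h1
    obtain ⟨y, hy⟩ := h2.prod_right_ae.exists
    exact hy
  -- integrals of functions of the n₀-th coordinate
  have hint : ∀ (h : X n₀ → E), AEStronglyMeasurable h (μ n₀) →
      ∀ t : Set (X n₀), MeasurableSet t →
      ∫ x in (fun x : ∀ n, X n => x n₀) ⁻¹' t, h (x n₀) ∂(Measure.pi μ)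
        = ∫ y in t, h y ∂(μ n₀) := by
    intro h hh t ht
    have := setIntegral_map (f := h) (g := fun x : ∀ n, X n => x n₀) ht
      (by rwa [hev.map_eq]) hev.measurable.aemeasurable
    rw [hev.map_eq] at this
    exact this.symm
  -- integral over a box of a function of the n₀-th coordinate
  have key : ∀ (h : X n₀ → E), AEStronglyMeasurable h (μ n₀) →
      ∀ t : ∀ n, Set (X n), (∀ n, MeasurableSet (t n)) →
      ∫ x in univ.pi t, h (x n₀) ∂(Measure.pi μ)
        = ((Measure.pi fun i : {n // p n} => μ i)
              (univ.pi fun i : {n // p n} => t i)).toReal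
            • ∫ y in t n₀, h y ∂(μ n₀) := by
    intro h hh t ht
    have hbox : MeasurableSet (univ.pi t) := MeasurableSet.univ_pi ht
    rw [← integral_indicator hbox]
    have hfact : ∀ x : ∀ n, X n,
        (univ.pi t).indicator (fun x : ∀ n, X n => h (x n₀)) x
          = ((univ.pi fun i : {n // p n} => t i).indicator
                (fun _ => (1 : ℝ)) (ψ x).1) • ((t n₀).indicator h ((ψ x).2)) := by
      intro x
      rw [hψa]
      by_cases hx : x ∈ univ.pi t
      · rw [indicator_of_mem hx]
        have h1 : (fun i : {n // p n} => x i) ∈ univ.pi fun i : {n // p n} => t i :=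
          fun i _ => hx i (mem_univ _)
        rw [indicator_of_mem h1, indicator_of_mem (hx n₀ (mem_univ _)), one_smul]
      · rw [indicator_of_notMem hx]
        obtain ⟨n, hn⟩ : ∃ n, x n ∉ t n := by simpa [Set.mem_pi] using hx
        by_cases hn0 : n = n₀
        · subst hn0; rw [indicator_of_notMem hn, smul_zero]
        · have hnot : (fun i : {n // p n} => x i) ∉ univ.pi fun i : {n // p n} => t i :=
            fun hmem => hn (hmem ⟨n, hn0⟩ (mem_univ _))
          rw [indicator_of_notMem hnot, zero_smul]
    simp_rw [hfact]
    rw [show (∫ x, ((univ.pi fun i : {n // p n} => t i).indicator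
            (fun _ => (1 : ℝ)) (ψ x).1) • ((t n₀).indicator h ((ψ x).2)) ∂(Measure.pi μ))
        = ∫ z : (∀ i : {n // p n}, X i) × X n₀,
            ((univ.pi fun i : {n // p n} => t i).indicator (fun _ => (1 : ℝ)) z.1)
              • ((t n₀).indicator h z.2)
            ∂((Measure.pi fun i : {n // p n} => μ i).prod (μ n₀))
      from hψ.integral_comp ψ.measurableEmbedding
        (fun z : (∀ i : {n // p n}, X i) × X n₀ =>
          ((univ.pi fun i : {n // p n} => t i).indicator (fun _ => (1 : ℝ)) z.1)
            • ((t n₀).indicator h z.2))]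
    rw [integral_prod_smul, integral_indicator_const (1 : ℝ)
        (MeasurableSet.univ_pi fun i : {n // p n} => ht i),
      integral_indicator (ht n₀), smul_eq_mul, mul_one]
    rfl
  -- the two sub-σ-algebras are below the product σ-algebra
  have hm₁ : (G n₀).comap (fun x : ∀ n, X n => x n₀) ≤ MeasurableSpace.pi :=
    (MeasurableSpace.comap_mono (hG n₀)).trans
      (measurable_iff_comap_le.mp (measurable_pi_apply n₀))
  have hm₂ : (⨆ n : Fin N, (G n).comap fun x : ∀ n, X n => x n) ≤ MeasurableSpace.pi :=
    iSup_le fun n => (MeasurableSpace.comap_mono (hG n)).trans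
      (measurable_iff_comap_le.mp (measurable_pi_apply n))
  -- the candidate function
  set g₀ : X n₀ → E := (μ n₀)[f | G n₀] with hg₀def
  have hg₀sm : StronglyMeasurable[G n₀] g₀ := stronglyMeasurable_condExp
  have hg₀i : Integrable g₀ (μ n₀) := integrable_condExp
  have hg₀ae : AEStronglyMeasurable g₀ (μ n₀) := (hg₀sm.mono (hG n₀)).aestronglyMeasurable
  have hgi : Integrable (fun x : ∀ n, X n => g₀ (x n₀)) (Measure.pi μ) :=
    (hev.integrable_comp hg₀ae).mpr hg₀i
  have hsm_small : StronglyMeasurable[(G n₀).comap (fun x : ∀ n, X n => x n₀)]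
      (fun x : ∀ n, X n => g₀ (x n₀)) :=
    hg₀sm.comp_measurable (comap_measurable _)
  have htot : ∫ x, g₀ (x n₀) ∂(Measure.pi μ) = ∫ x, f (x n₀) ∂(Measure.pi μ) := by
    have h1 := hint g₀ hg₀ae univ MeasurableSet.univ
    have h2 := hint f hfi.aestronglyMeasurable univ MeasurableSet.univ
    simp only [Set.preimage_univ, Measure.restrict_univ] at h1 h2
    rw [h1, h2, integral_condExp (hG n₀)]
  -- first identification
  have hA : (fun x : ∀ n, X n => g₀ (x n₀)) =ᵐ[Measure.pi μ]
      (Measure.pi μ)[(fun x : ∀ n, X n => f (x n₀)) |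
        (G n₀).comap (fun x : ∀ n, X n => x n₀)] := by
    refine ae_eq_condExp_of_forall_setIntegral_eq hm₁ hf
      (fun s _ _ => hgi.integrableOn) ?_ ⟨_, hsm_small, Filter.EventuallyEq.rfl⟩
    intro s hs _
    obtain ⟨t, ht, rfl⟩ := hs
    rw [hint g₀ hg₀ae t (hG n₀ t ht), hint f hfi.aestronglyMeasurable t (hG n₀ t ht)]
    exact setIntegral_condExp (hG n₀) hfi ht
  -- second identification
  have hB : (fun x : ∀ n, X n => g₀ (x n₀)) =ᵐ[Measure.pi μ]
      (Measure.pi μ)[(fun x : ∀ n, X n => f (x n₀)) |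
        ⨆ n : Fin N, (G n).comap fun x : ∀ n, X n => x n] := by
    refine ae_eq_condExp_of_forall_setIntegral_eq hm₂ hf
      (fun s _ _ => hgi.integrableOn) ?_
      ⟨_, hsm_small.mono (le_iSup (fun n : Fin N =>
        (G n).comap fun x : ∀ n, X n => x n) n₀), Filter.EventuallyEq.rfl⟩
    intro s hs _
    have heq : (⨆ n : Fin N, (G n).comap fun x : ∀ n, X n => x n)
        = MeasurableSpace.generateFrom
            (pi univ '' pi univ fun n => {s : Set (X n) | MeasurableSet[G n] s}) :=
      (@generateFrom_pi (Fin N) X _ G).symm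
    refine @MeasurableSpace.induction_on_inter _
      (⨆ n : Fin N, (G n).comap fun x : ∀ n, X n => x n)
      (fun s _ => ∫ x in s, g₀ (x n₀) ∂(Measure.pi μ)
        = ∫ x in s, f (x n₀) ∂(Measure.pi μ)) _ heq
      (@isPiSystem_pi (Fin N) X G) ?_ ?_ ?_ ?_ s hs
    · simp
    · rintro _ ⟨t, htm, rfl⟩
      have ht : ∀ n, MeasurableSet (t n) := fun n => hG n _ (htm n (mem_univ n))
      rw [key g₀ hg₀ae t ht, key f hfi.aestronglyMeasurable t ht,
        setIntegral_condExp (hG n₀) hfi (htm n₀ (mem_univ n₀))]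
    · intro s hsm hrec
      have hs' : MeasurableSet s := hm₂ s hsm
      rw [eq_sub_of_add_eq' (integral_add_compl hs' hgi),
        eq_sub_of_add_eq' (integral_add_compl hs' hf), htot, hrec]
    · intro s hdisj hsm hrec
      rw [integral_iUnion (fun i => hm₂ _ (hsm i)) hdisj hgi.integrableOn,
        integral_iUnion (fun i => hm₂ _ (hsm i)) hdisj hf.integrableOn]
      exact tsum_congr hrec
  exact hA.symm.trans hB
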